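/- For integers N, n, p with 1 ≤ p ≤ n+1 and N ≥ 2, Σ_{2 ≤ m ≤ N} m^2 * C(m-1, p) * C(N-m, n+1-p) = (p+1)(p+2) * C(N+2, n+4) - (p+1) * C(N+1, n+3). -/

import Mathlib

open Finset


lemma aux_vdm (b : ℕ) : ∀ M a : ℕ,
    ∑ i ∈ range (M + 1), Nat.choose i a * Nat.choose (M - i) b
      = Nat.choose (M + 1) (a + b + 1) := by
  induction b with
  | zero =>
    intro M a
    simp only [Nat.choose_zero_right, mul_one, Nat.add_zero]
    rw [← Nat.sum_Icc_choose M a]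
    apply (Finset.sum_subset _ _).symm
    · intro i hi
      rw [mem_Icc] at hi
      rw [mem_range]
      omega
    · intro i h1 hi
      rw [mem_range] at h1
      rw [mem_Icc] at hi
      exact Nat.choose_eq_zero_of_lt (by omega)
  | succ b ih =>
    intro M a
    induction M with
    | zero =>
      simp [Nat.choose_eq_zero_of_lt (show 1 < a + (b + 1) + 1 by omega)]
    | succ M ihM =>
      rw [Finset.sum_range_succ]
      have hz : Nat.choose (M + 1 - (M + 1)) (b + 1) = 0 := by simp
      rw [hz, mul_zero, add_zero]
      have : ∀ i ∈ range (M + 1),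
          Nat.choose i a * Nat.choose (M + 1 - i) (b + 1)
            = Nat.choose i a * Nat.choose (M - i) (b + 1)
              + Nat.choose i a * Nat.choose (M - i) b := by
        intro i hi
        simp only [mem_range] at hi
        have : M + 1 - i = (M - i) + 1 := by omega
        rw [this, Nat.choose_succ_succ' (M - i) b, mul_add]; omega
      rw [Finset.sum_congr rfl this, Finset.sum_add_distrib, ihM, ih M a,
        show a + (b + 1) + 1 = (a + b + 1) + 1 from rfl,
        Nat.choose_succ_succ' (M + 1) (a + b + 1)]
      omega

lemma aux_term (m p : ℕ) (hm : 1 ≤ m) :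
    m ^ 2 * Nat.choose (m - 1) p + (p + 1) * Nat.choose m (p + 1)
      = (p + 1) * (p + 2) * Nat.choose (m + 1) (p + 2) := by
  have h1 : m * Nat.choose (m - 1) p = Nat.choose m (p + 1) * (p + 1) := by
    have h := Nat.add_one_mul_choose_eq (m - 1) p
    have e : m - 1 + 1 = m := by omega
    rw [e] at h
    exact h
  have h2 : (m + 1) * Nat.choose m (p + 1) = Nat.choose (m + 1) (p + 2) * (p + 2) := by
    exact Nat.add_one_mul_choose_eq m (p + 1)
  have : m ^ 2 * Nat.choose (m - 1) p = m * (Nat.choose m (p + 1) * (p + 1)) := by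
    rw [← h1]; ring
  rw [this]
  nlinarith [h2]


/-- `∑_{m=2}^{N} m² C(m-1,p) C(N-m,n+1-p) = (p+1)(p+2) C(N+2,n+4) - (p+1) C(N+1,n+3)`. -/
theorem stmt_4 (N n p : ℕ) (hN : 2 ≤ N) (hp : 1 ≤ p) (hpn : p ≤ n + 1) :
    (↑(∑ m ∈ Icc 2 N, m ^ 2 * Nat.choose (m - 1) p * Nat.choose (N - m) (n + 1 - p)) : ℤ)
      = (p + 1) * (p + 2) * Nat.choose (N + 2) (n + 4)
        - (p + 1) * Nat.choose (N + 1) (n + 3) := by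
  set q := n + 1 - p with hq
  -- extend sum to range (N+1)
  have hext : ∑ m ∈ Icc 2 N, m ^ 2 * Nat.choose (m - 1) p * Nat.choose (N - m) q
      = ∑ m ∈ range (N + 1), m ^ 2 * Nat.choose (m - 1) p * Nat.choose (N - m) q := by
    apply Finset.sum_subset
    · intro i hi
      rw [mem_Icc] at hi; rw [mem_range]; omega
    · intro i h1 h2
      rw [mem_range] at h1; rw [mem_Icc] at h2
      have : i = 0 ∨ i = 1 := by omega
      rcases this with rfl | rfl
      · simp
      · simp [Nat.choose_eq_zero_of_lt hp]
  have key : (∑ m ∈ range (N + 1), m ^ 2 * Nat.choose (m - 1) p * Nat.choose (N - m) q)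
        + (p + 1) * Nat.choose (N + 1) (n + 3)
      = (p + 1) * (p + 2) * Nat.choose (N + 2) (n + 4) := by
    have hs1 : ∑ m ∈ range (N + 1), Nat.choose m (p + 1) * Nat.choose (N - m) q
        = Nat.choose (N + 1) (n + 3) := by
      rw [aux_vdm q N (p + 1)]
      congr 1
      omega
    have hs2 : ∑ m ∈ range (N + 1), Nat.choose (m + 1) (p + 2) * Nat.choose (N - m) q
        = Nat.choose (N + 2) (n + 4) := by
      have := Finset.sum_range_succ' (fun i => Nat.choose i (p + 2) * Nat.choose (N + 1 - i) q) (N + 1)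
      simp only [Nat.choose_zero_succ, zero_mul, add_zero, Nat.succ_sub_succ] at this
      rw [← this, aux_vdm q (N + 1) (p + 2)]
      congr 1
      omega
    calc (∑ m ∈ range (N + 1), m ^ 2 * Nat.choose (m - 1) p * Nat.choose (N - m) q)
          + (p + 1) * Nat.choose (N + 1) (n + 3)
        = ∑ m ∈ range (N + 1), (m ^ 2 * Nat.choose (m - 1) p
            + (p + 1) * Nat.choose m (p + 1)) * Nat.choose (N - m) q := by
          rw [← hs1, Finset.mul_sum, ← Finset.sum_add_distrib]
          congr 1; ext m; ring
      _ = ∑ m ∈ range (N + 1), ((p + 1) * (p + 2) * Nat.choose (m + 1) (p + 2))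
            * Nat.choose (N - m) q := by
          apply Finset.sum_congr rfl
          intro m hm
          rcases Nat.eq_zero_or_pos m with rfl | hm1
          · simp [Nat.choose_eq_zero_of_lt hp, Nat.choose_eq_zero_of_lt
              (show 1 < p + 2 by omega)]
          · rw [aux_term m p hm1]
      _ = (p + 1) * (p + 2) * Nat.choose (N + 2) (n + 4) := by
          rw [← hs2, Finset.mul_sum]
          congr 1; ext m; ring
  rw [hext]
  push_cast
  push_cast at key
  linarith [key]
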